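/- Let 1 ≤ k ≤ n and let Z_1, …, Z_k ⊆ {1, …, n} be such that |∩_{i∈Ω} Z_i| + |Ω| = k for every nonempty Ω ⊆ {1, …, k}. Then for every prime power q and every integer m ≥ n there exist elements β_1, …, β_n ∈ F_{q^m} that are linearly independent over F_q, and a matrix G ∈ F_{q^m}^{k×n} of rank k with G_{ij} = 0 for all i ∈ {1, …, k} and j ∈ Z_i, whose row space equals the Gabidulin code {(Σ_{r=0}^{k−1} f_r β_1^{q^r}, …, Σ_{r=0}^{k−1} f_r β_n^{q^r}) : f_0, …, f_{k−1} ∈ F_{q^m}}. -/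

import Mathlib

open Matrix

open Polynomial in
lemma moore_row_eq_zero {Fq K : Type*} [Field Fq] [Fintype Fq] [Field K] [Algebra Fq K]
    {q : ℕ} (hq : Fintype.card Fq = q)
    {ι : Type*} [Fintype ι] {γ : ι → K} (hγ : LinearIndependent Fq γ)
    {s : ℕ} (hs : s ≤ Fintype.card ι)
    (v : Fin s → K) (hv : ∀ j, ∑ r : Fin s, v r * γ j ^ q ^ (r : ℕ) = 0) :
    v = 0 := by
  classical
  rcases Nat.eq_zero_or_pos s with h0 | hspos
  · subst h0; exact Subsingleton.elim v 0
  by_contra hne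
  obtain ⟨r0, hr0⟩ := Function.ne_iff.mp hne
  have hr0 : v r0 ≠ 0 := hr0
  have hq2 : 1 < q := hq ▸ Fintype.one_lt_card
  obtain ⟨p, hpFq⟩ := CharP.exists Fq
  haveI := hpFq
  have hpp : p.Prime := CharP.char_is_prime Fq p
  haveI : Fact p.Prime := ⟨hpp⟩
  obtain ⟨e, _, hcard⟩ := FiniteField.card Fq p
  haveI : CharP K p := charP_of_injective_algebraMap (algebraMap Fq K).injective p
  haveI : ExpChar K p := ExpChar.prime hpp
  have hqpe : q = p ^ (e : ℕ) := hq ▸ hcard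
  -- frobenius additivity
  have hfrob : ∀ (t : ℕ) (x y : K), (x + y) ^ q ^ t = x ^ q ^ t + y ^ q ^ t := by
    intro t x y
    rw [hqpe, ← pow_mul, add_pow_char_pow]
  have hsmul : ∀ (t : ℕ) (c : Fq) (x : K), (c • x) ^ q ^ t = c • x ^ q ^ t := by
    intro t c x
    rw [Algebra.smul_def, mul_pow, ← map_pow, Algebra.smul_def]
    congr 2
    have h := FiniteField.pow_card_pow t c
    rw [hq] at h
    exact h
  set f : K[X] := ∑ r : Fin s, C (v r) * X ^ (q ^ (r : ℕ)) with hf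
  have hpowinj : Function.Injective (fun r : Fin s => q ^ (r : ℕ)) := by
    intro a b hab
    exact Fin.val_injective (Nat.pow_right_injective hq2 hab)
  have hcoeff : ∀ r : Fin s, f.coeff (q ^ (r : ℕ)) = v r := by
    intro r
    rw [hf, finset_sum_coeff]
    rw [Finset.sum_eq_single r]
    · simp
    · intro b _ hbr
      have hne2 : q ^ (r : ℕ) ≠ q ^ (b : ℕ) := fun h => (hbr (hpowinj h).symm).elim
      simp [coeff_C_mul, coeff_X_pow, hne2, hne2.symm]
    · simp
  have hf0 : f ≠ 0 := fun h => hr0 (by rw [← hcoeff r0, h, coeff_zero])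
  have hdeg : f.natDegree ≤ q ^ (s - 1) := by
    apply natDegree_sum_le_of_forall_le
    intro r _
    refine le_trans (natDegree_C_mul_le _ _) ?_
    rw [natDegree_X_pow]
    exact Nat.pow_le_pow_right (Nat.one_le_of_lt hq2) (by omega)
  have hroot : ∀ c : ι → Fq, f.IsRoot (∑ j, c j • γ j) := by
    intro c
    have hpowsum : ∀ t : ℕ, (∑ j, c j • γ j) ^ q ^ t = ∑ j, c j • γ j ^ q ^ t := by
      intro t
      have := map_sum (AddMonoidHom.mk' (fun x : K => x ^ q ^ t) (hfrob t))
        (fun j => c j • γ j) Finset.univ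
      simp only [AddMonoidHom.mk'_apply] at this
      rw [this]
      exact Finset.sum_congr rfl fun j _ => hsmul t (c j) (γ j)
    have : f.eval (∑ j, c j • γ j) = 0 := by
      rw [hf, eval_finset_sum]
      simp only [eval_mul, eval_C, eval_pow, eval_X]
      calc ∑ r : Fin s, v r * (∑ j, c j • γ j) ^ q ^ (r : ℕ)
          = ∑ r : Fin s, ∑ j, c j • (v r * γ j ^ q ^ (r : ℕ)) := by
            refine Finset.sum_congr rfl fun r _ => ?_
            rw [hpowsum, Finset.mul_sum]
            exact Finset.sum_congr rfl fun j _ => mul_smul_comm _ _ _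
        _ = ∑ j, c j • ∑ r : Fin s, v r * γ j ^ q ^ (r : ℕ) := by
            rw [Finset.sum_comm]
            exact Finset.sum_congr rfl fun j _ => (Finset.smul_sum).symm
        _ = 0 := by simp [hv]
    exact this
  have hinj : Function.Injective (fun c : ι → Fq => ∑ j, c j • γ j) := by
    intro a b hab
    have : ∑ j, (a - b) j • γ j = 0 := by
      simp only [Pi.sub_apply, sub_smul, Finset.sum_sub_distrib]
      rw [sub_eq_zero]
      exact hab
    have := Fintype.linearIndependent_iff.mp hγ _ this
    funext j
    have := this j
    exact sub_eq_zero.mp this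
  have hsub : Finset.univ.image (fun c : ι → Fq => ∑ j, c j • γ j) ⊆ f.roots.toFinset := by
    intro x hx
    obtain ⟨c, _, rfl⟩ := Finset.mem_image.mp hx
    rw [Multiset.mem_toFinset, Polynomial.mem_roots hf0]
    exact hroot c
  have hcard1 : (Finset.univ.image (fun c : ι → Fq => ∑ j, c j • γ j)).card
      = q ^ Fintype.card ι := by
    rw [Finset.card_image_of_injective _ hinj, Finset.card_univ, Fintype.card_fun, hq]
  have hle : q ^ Fintype.card ι ≤ q ^ (s - 1) := by
    rw [← hcard1]
    exact le_trans (Finset.card_le_card hsub)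
      (le_trans (Multiset.toFinset_card_le _) (le_trans (Polynomial.card_roots' f) hdeg))
  have hsc : s - 1 < Fintype.card ι := Nat.lt_of_lt_of_le (Nat.sub_lt hspos Nat.one_pos) hs
  have hlt : q ^ (s - 1) < q ^ Fintype.card ι := Nat.pow_lt_pow_right hq2 hsc
  exact absurd hle (Nat.not_le.mpr hlt)

/-- Proposition 2: if `|∩_{i∈Ω} Z_i| + |Ω| = k` for every nonempty `Ω ⊆ {1,…,k}`, then
for any prime power `q` and `m ≥ n` there is an `[n,k]_{q^m}` Gabidulin code with a
generator matrix `G` fulfilling the support constraints `G_{ij} = 0` for `j ∈ Z_i`. -/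
theorem exists_Gabidulin_with_support_constrained_generator
    (n k : ℕ) (hk : 1 ≤ k) (hkn : k ≤ n)
    (q m : ℕ) (Fq K : Type*) [Field Fq] [Fintype Fq] (hq : Fintype.card Fq = q)
    [Field K] [Algebra Fq K] (hm : Module.finrank Fq K = m) (hmn : n ≤ m)
    (Z : Fin k → Finset (Fin n))
    (hZ : ∀ Ω : Finset (Fin k), Ω.Nonempty → (Ω.inf Z).card + Ω.card = k) :
    ∃ (β : Fin n → K) (G : Matrix (Fin k) (Fin n) K),
      LinearIndependent Fq β ∧
      G.rank = k ∧
      (∀ (i : Fin k) (j : Fin n), j ∈ Z i → G i j = 0) ∧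
      (Submodule.span K (Set.range fun i : Fin k => G i) : Set (Fin n → K)) =
        {c : Fin n → K | ∃ f : Fin k → K,
          c = fun j => ∑ r : Fin k, f r * β j ^ q ^ (r : ℕ)} := by
  classical
  haveI : FiniteDimensional Fq K := FiniteDimensional.of_finrank_pos (by omega)
  let b := Module.finBasis Fq K
  let emb : Fin n → Fin (Module.finrank Fq K) := fun j => ⟨j, by have := j.2; omega⟩
  have hembinj : Function.Injective emb := by
    intro a c h
    simpa [emb, Fin.ext_iff] using congrArg Fin.val h
  set β : Fin n → K := fun j => b (emb j) with hβdef
  have hβ : LinearIndependent Fq β := b.linearIndependent.comp emb hembinj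
  -- key vanishing lemmas
  have key : ∀ (U : Finset (Fin n)), U.card = k → ∀ w : Fin k → K,
      (∀ j ∈ U, ∑ r : Fin k, w r * β j ^ q ^ (r : ℕ) = 0) → w = 0 := by
    intro U hU w hw
    have hcard : k ≤ Fintype.card U := by simp [Fintype.card_coe, hU]
    exact moore_row_eq_zero hq (hβ.comp Subtype.val Subtype.val_injective) hcard w
      (fun j => hw j j.2)
  have keyall : ∀ w : Fin k → K,
      (∀ j : Fin n, ∑ r : Fin k, w r * β j ^ q ^ (r : ℕ) = 0) → w = 0 := by
    intro w hw
    exact moore_row_eq_zero hq hβ (by simpa using hkn) w hw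
  -- cardinality of Z i
  have hZcard : ∀ i, (Z i).card + 1 = k := by
    intro i
    have := hZ {i} ⟨i, Finset.mem_singleton_self i⟩
    simpa using this
  -- existence of the rows of T
  have hwex : ∀ i : Fin k, ∃ w : Fin k → K, w ≠ 0 ∧
      ∀ j ∈ Z i, ∑ r : Fin k, w r * β j ^ q ^ (r : ℕ) = 0 := by
    intro i
    let A : Matrix (Fin k) (Z i) K := Matrix.of fun r j => β j ^ q ^ (r : ℕ)
    have hker : LinearMap.ker A.vecMulLinear ≠ ⊥ := by
      apply LinearMap.ker_ne_bot_of_finrank_lt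
      rw [Module.finrank_fintype_fun_eq_card, Module.finrank_fintype_fun_eq_card]
      simp only [Fintype.card_coe, Fintype.card_fin]
      have := hZcard i
      omega
    obtain ⟨w, hwker, hw0⟩ := Submodule.exists_mem_ne_zero_of_ne_bot hker
    refine ⟨w, hw0, ?_⟩
    intro j hj
    have := congrFun (LinearMap.mem_ker.mp hwker) ⟨j, hj⟩
    simpa [Matrix.vecMul, dotProduct, A] using this
  choose w hw0 hwZ using hwex
  let T : Matrix (Fin k) (Fin k) K := Matrix.of fun i r => w i r
  have hTw : ∀ i, T i = w i := fun i => rfl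
  -- T is nonsingular
  have hTdet : T.det ≠ 0 := by
    rw [Ne, ← Matrix.exists_vecMul_eq_zero_iff]
    rintro ⟨v, hv0, hvT⟩
    obtain ⟨i0, hvi0⟩ := Function.ne_iff.mp hv0
    have hvi0 : v i0 ≠ 0 := hvi0
    -- the linear relation evaluated against each column functional
    have hsum : ∀ j : Fin n, ∑ i : Fin k, v i * (∑ r : Fin k, w i r * β j ^ q ^ (r : ℕ)) = 0 := by
      intro j
      have hrow : ∀ r : Fin k, ∑ i : Fin k, v i * w i r = 0 := by
        intro r
        have := congrFun hvT r
        simpa [Matrix.vecMul, dotProduct, T] using this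
      calc ∑ i : Fin k, v i * (∑ r : Fin k, w i r * β j ^ q ^ (r : ℕ))
          = ∑ r : Fin k, (∑ i : Fin k, v i * w i r) * β j ^ q ^ (r : ℕ) := by
            simp_rw [Finset.mul_sum, Finset.sum_mul, mul_assoc]
            exact Finset.sum_comm
        _ = 0 := by simp [hrow]
    set Ω : Finset (Fin k) := Finset.univ.filter (fun i => v i ≠ 0) with hΩdef
    have hi0Ω : i0 ∈ Ω := Finset.mem_filter.mpr ⟨Finset.mem_univ _, hvi0⟩
    set Ω' : Finset (Fin k) := Ω.erase i0 with hΩ'def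
    have hvan0 : ∀ j ∈ Z i0, ∑ r : Fin k, w i0 r * β j ^ q ^ (r : ℕ) = 0 := hwZ i0
    rcases Finset.eq_empty_or_nonempty Ω' with hΩ'e | hΩ'ne
    · -- v is supported on {i0} alone
      have hwi0 : w i0 = 0 := by
        funext r
        have hrow : ∑ i : Fin k, v i * w i r = 0 := by
          have := congrFun hvT r
          simpa [Matrix.vecMul, dotProduct, T] using this
        rw [Finset.sum_eq_single i0] at hrow
        · exact (mul_eq_zero.mp hrow).resolve_left hvi0
        · intro i _ hii0
          have hvi : v i = 0 := by
            by_contra hvi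
            exact (Finset.ne_empty_of_mem (Finset.mem_erase.mpr
              ⟨hii0, Finset.mem_filter.mpr ⟨Finset.mem_univ _, hvi⟩⟩)) hΩ'e
          rw [hvi, zero_mul]
        · intro h; exact absurd (Finset.mem_univ i0) h
      exact hw0 i0 hwi0
    · -- main case
      set U : Finset (Fin n) := Z i0 ∪ Ω'.inf Z with hUdef
      have hΩins : Ω = insert i0 Ω' := (Finset.insert_erase hi0Ω).symm
      have hΩne : Ω.Nonempty := ⟨i0, hi0Ω⟩
      have hinf : Ω.inf Z = Z i0 ∩ Ω'.inf Z := by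
        rw [hΩins, Finset.inf_insert, Finset.inf_eq_inter]
      have hU : U.card = k := by
        have h1 := hZ Ω hΩne
        have h2 := hZ Ω' hΩ'ne
        have h3 := hZcard i0
        have h4 : U.card + (Z i0 ∩ Ω'.inf Z).card = (Z i0).card + (Ω'.inf Z).card :=
          Finset.card_union_add_card_inter _ _
        have h5 : Ω'.card + 1 = Ω.card := by
          rw [hΩins, Finset.card_insert_of_notMem (Finset.notMem_erase _ _)]
        rw [hinf] at h1
        omega
      have hvanU : ∀ j ∈ U, ∑ r : Fin k, w i0 r * β j ^ q ^ (r : ℕ) = 0 := by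
        intro j hj
        rcases Finset.mem_union.mp hj with hj0 | hjinf
        · exact hvan0 j hj0
        · have hsumj := hsum j
          rw [Finset.sum_eq_single i0] at hsumj
          · exact (mul_eq_zero.mp hsumj).resolve_left hvi0
          · intro i _ hii0
            by_cases hvi : v i = 0
            · rw [hvi, zero_mul]
            · have hiΩ' : i ∈ Ω' := Finset.mem_erase.mpr
                ⟨hii0, Finset.mem_filter.mpr ⟨Finset.mem_univ _, hvi⟩⟩
              have hsubZ : Ω'.inf Z ⊆ Z i := Finset.le_iff_subset.mp (Finset.inf_le hiΩ')
              have hjZ : j ∈ Z i := hsubZ hjinf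
              rw [hwZ i j hjZ, mul_zero]
          · intro h; exact absurd (Finset.mem_univ i0) h
      exact hw0 i0 (key U hU (w i0) hvanU)
  have hTunit : IsUnit T.det := isUnit_iff_ne_zero.mpr hTdet
  let M : Matrix (Fin k) (Fin n) K := Matrix.of fun r j => β j ^ q ^ (r : ℕ)
  have hvecmulM : ∀ u : Fin k → K,
      u ᵥ* M = fun j => ∑ r : Fin k, u r * β j ^ q ^ (r : ℕ) := by
    intro u; funext j
    simp [Matrix.vecMul, dotProduct, M]
  set G : Matrix (Fin k) (Fin n) K := T * M with hGdef
  have hG : ∀ i j, G i j = ∑ r : Fin k, w i r * β j ^ q ^ (r : ℕ) := by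
    intro i j
    simp [hGdef, Matrix.mul_apply, M, T]
  have hvecmulG : ∀ c : Fin k → K, c ᵥ* G = (c ᵥ* T) ᵥ* M := by
    intro c; rw [hGdef, Matrix.vecMul_vecMul]
  have hsumrows : ∀ c : Fin k → K, ∑ i : Fin k, c i • G i = c ᵥ* G := by
    intro c
    funext j
    simp [Matrix.vecMul, dotProduct, Finset.sum_apply]
  refine ⟨β, G, hβ, ?_, ?_, ?_⟩
  · -- rank
    have hli : LinearIndependent K G := by
      apply Fintype.linearIndependent_iff.mpr
      intro g hg
      have hu : g ᵥ* T = 0 := by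
        apply keyall
        intro j
        have : (g ᵥ* T) ᵥ* M = 0 := by
          rw [← hvecmulG, ← hsumrows]
          exact hg
        have hj := congrFun this j
        rw [hvecmulM] at hj
        exact hj
      have hg0 : g = 0 := by
        by_contra hg0
        exact hTdet (Matrix.exists_vecMul_eq_zero_iff.mp ⟨g, hg0, hu⟩)
      intro i; rw [hg0]; rfl
    have := hli.rank_matrix
    simpa using this
  · intro i j hj
    rw [hG]
    exact hwZ i j hj
  · ext x
    simp only [SetLike.mem_coe, Set.mem_setOf_eq]
    rw [Submodule.mem_span_range_iff_exists_fun]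
    constructor
    · rintro ⟨c, rfl⟩
      refine ⟨c ᵥ* T, ?_⟩
      rw [hsumrows, hvecmulG, hvecmulM]
    · rintro ⟨f, rfl⟩
      refine ⟨f ᵥ* T⁻¹, ?_⟩
      rw [hsumrows, hvecmulG, Matrix.vecMul_vecMul f T⁻¹ T, Matrix.nonsing_inv_mul T hTunit,
        Matrix.vecMul_one, hvecmulM]
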